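/- Let X be a closed subspace of a Banach space Y whose dual is ℓ¹ with standard basis {e_n*}. Then every extreme point f* of the closed unit ball of X* is of the form f* = δ·(e_k*|_X) for some k ∈ ℕ and some δ ∈ {−1, 1}. -/

import Mathlib

open Filter Topology

noncomputable section

lemma lp1_norm_eq (x : lp (fun _ : ℕ => ℝ) 1) : ‖x‖ = ∑' n, |x n| := by
  have hp : (0:ℝ) < (1 : ENNReal).toReal := by simp
  rw [lp.norm_eq_tsum_rpow hp x]
  simp [Real.norm_eq_abs]

lemma lp1_extreme (x : lp (fun _ : ℕ => ℝ) 1)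
    (hx : x ∈ Set.extremePoints ℝ (Metric.closedBall (0 : lp (fun _ : ℕ => ℝ) 1) 1)) :
    ∃ (k : ℕ) (δ : ℝ), (δ = 1 ∨ δ = -1) ∧ x = δ • lp.single 1 k 1 := by
  have hp : (0:ℝ) < (1 : ENNReal).toReal := by simp
  obtain ⟨hxmem, hext⟩ := hx
  have hx1 : ‖x‖ ≤ 1 := mem_closedBall_zero_iff.1 hxmem
  have hsingle_norm : ∀ i : ℕ, ‖(lp.single 1 i (1:ℝ) : lp (fun _ : ℕ => ℝ) 1)‖ = 1 := by
    intro i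
    simpa using lp.norm_single (E := fun _ : ℕ => ℝ) hp (fun _ => (1:ℝ)) i
  -- Step 1 : the norm is 1
  have hnorm : ‖x‖ = 1 := by
    by_contra h
    have hlt : ‖x‖ < 1 := lt_of_le_of_ne hx1 h
    set c : ℝ := 1 - ‖x‖ with hc
    have hc0 : 0 < c := by simp [hc]; linarith
    set e : lp (fun _ : ℕ => ℝ) 1 := lp.single 1 0 (1:ℝ) with he
    have hmem1 : x + c • e ∈ Metric.closedBall (0 : lp (fun _ : ℕ => ℝ) 1) 1 := by
      rw [mem_closedBall_zero_iff]
      calc ‖x + c • e‖ ≤ ‖x‖ + ‖c • e‖ := norm_add_le _ _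
        _ ≤ ‖x‖ + c := by rw [norm_smul, hsingle_norm]; simp [abs_of_pos hc0]
        _ = 1 := by simp [hc]
    have hmem2 : x - c • e ∈ Metric.closedBall (0 : lp (fun _ : ℕ => ℝ) 1) 1 := by
      rw [mem_closedBall_zero_iff]
      calc ‖x - c • e‖ ≤ ‖x‖ + ‖c • e‖ := norm_sub_le _ _
        _ ≤ ‖x‖ + c := by rw [norm_smul, hsingle_norm]; simp [abs_of_pos hc0]
        _ = 1 := by simp [hc]
    have hseg : x ∈ openSegment ℝ (x + c • e) (x - c • e) :=
      ⟨1/2, 1/2, by norm_num, by norm_num, by norm_num, by module⟩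
    have := hext hmem1 hmem2 hseg
    have : c • e = 0 := by
      have := congrArg (fun y => y - x) this
      simpa [add_sub_cancel_left] using this
    have : ‖c • e‖ = 0 := by rw [this]; simp
    rw [norm_smul, hsingle_norm] at this
    simp [abs_of_pos hc0] at this
    exact hc0.ne' this
  -- Step 2 : pick a nonzero coordinate
  have hxne : ∃ i, x i ≠ 0 := by
    by_contra h
    push_neg at h
    have : x = 0 := by
      ext i
      simp [h i]
    rw [this] at hnorm
    simp at hnorm
  obtain ⟨i, hi⟩ := hxne
  set c : ℝ := x i with hcdef
  have hcsingle : (lp.single 1 i c : lp (fun _ : ℕ => ℝ) 1) = c • lp.single 1 i (1:ℝ) := by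
    rw [← lp.single_smul]; norm_num
  set s : lp (fun _ : ℕ => ℝ) 1 := x - lp.single 1 i c with hs
  have hsnorm : ‖s‖ = 1 - |c| := by
    have := lp.norm_compl_sum_single (E := fun _ : ℕ => ℝ) hp x {i}
    simp only [Finset.sum_singleton] at this
    simp only [ENNReal.toReal_one, Real.rpow_one] at this
    rw [hs, this, hnorm, Real.norm_eq_abs]
  have habs_le : |c| ≤ 1 := by
    have : (0:ℝ) ≤ ‖s‖ := norm_nonneg _
    linarith [hsnorm ▸ this]
  rcases eq_or_lt_of_le habs_le with habs | habs
  · -- |c| = 1 : x is supported at i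
    refine ⟨i, c, (abs_eq zero_le_one).1 habs, ?_⟩
    have : ‖s‖ = 0 := by rw [hsnorm, habs]; ring
    have hs0 : s = 0 := norm_eq_zero.1 this
    have hx' : x = lp.single 1 i c := by
      have := congrArg (fun y => y + lp.single 1 i c) hs0
      simpa [hs, sub_add_cancel] using this
    rw [hx', hcsingle]
  · -- |c| < 1 : split x as a proper convex combination
    have hc0 : c ≠ 0 := hi
    have ht0 : 0 < |c| := abs_pos.2 hc0
    set t : ℝ := |c| with htdef
    set u : lp (fun _ : ℕ => ℝ) 1 := (t⁻¹ * c) • lp.single 1 i (1:ℝ) with hu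
    set v : lp (fun _ : ℕ => ℝ) 1 := (1 - t)⁻¹ • s with hv
    have h1t : (1:ℝ) - t ≠ 0 := by linarith
    have hunorm : ‖u‖ = 1 := by
      rw [hu, norm_smul, hsingle_norm, mul_one, Real.norm_eq_abs, abs_mul, abs_inv, abs_abs]
      field_simp
    have hvnorm : ‖v‖ = 1 := by
      rw [hv, norm_smul, hsnorm, Real.norm_eq_abs, abs_inv,
        abs_of_pos (by linarith : (0:ℝ) < 1 - t)]
      field_simp
    have humem : u ∈ Metric.closedBall (0 : lp (fun _ : ℕ => ℝ) 1) 1 :=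
      mem_closedBall_zero_iff.2 hunorm.le
    have hvmem : v ∈ Metric.closedBall (0 : lp (fun _ : ℕ => ℝ) 1) 1 :=
      mem_closedBall_zero_iff.2 hvnorm.le
    have hseg : x ∈ openSegment ℝ u v := by
      refine ⟨t, 1 - t, ht0, by linarith, by ring, ?_⟩
      rw [hu, hv, smul_smul, smul_smul]
      have h1 : t * (t⁻¹ * c) = c := by field_simp
      have h2 : (1 - t) * (1 - t)⁻¹ = 1 := mul_inv_cancel₀ h1t
      rw [h1, h2, one_smul, hs, ← hcsingle]
      abel
    have := hext humem hvmem hseg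
    refine ⟨i, t⁻¹ * c, ?_, by rw [← this, hu]⟩
    have : |t⁻¹ * c| = 1 := by
      rw [abs_mul, abs_inv, abs_abs]; field_simp
    exact (abs_eq zero_le_one).1 this

set_option maxHeartbeats 1000000 in
set_option synthInstance.maxHeartbeats 400000 in
/-- if `X` is a closed subspace of a Banach space `Y` whose dual is
(isometric to) `ℓ¹` with standard basis `e_n* = T (lp.single 1 n 1)`, then every
extreme point `f` of the closed unit ball of `X*` has the form `f = δ • (e_k*|_X)`
for some `k ∈ ℕ` and `δ ∈ {−1, 1}`. -/
theorem stmt1 (Y : Type*) [NormedAddCommGroup Y] [NormedSpace ℝ Y] [CompleteSpace Y]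
    (T : lp (fun _ : ℕ => ℝ) 1 ≃ₗᵢ[ℝ] (Y →L[ℝ] ℝ))
    (X : Submodule ℝ Y) (hX : IsClosed (X : Set Y))
    (f : X →L[ℝ] ℝ)
    (hf : f ∈ Set.extremePoints ℝ (Metric.closedBall (0 : X →L[ℝ] ℝ) 1)) :
    ∃ (k : ℕ) (δ : ℝ), (δ = 1 ∨ δ = -1) ∧
      f = δ • (T (lp.single 1 k 1)).comp X.subtypeL := by
  classical
  obtain ⟨hfmem, hfext⟩ := hf
  have hfdist : dist f 0 ≤ 1 := hfmem
  have hfnorm : ‖f‖ ≤ 1 := le_trans (le_of_eq (dist_zero_right f).symm) hfdist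
  -- the restriction map does not increase norms
  have hr_norm : ∀ g : Y →L[ℝ] ℝ, ‖g.comp X.subtypeL‖ ≤ ‖g‖ := by
    intro g
    refine ContinuousLinearMap.opNorm_le_bound _ (norm_nonneg g) fun v => ?_
    have : ‖g ↑v‖ ≤ ‖g‖ * ‖(v : Y)‖ := g.le_opNorm ↑v
    simpa using this
  -- the face over `f` inside the weak-star dual
  set S : Set (WeakDual ℝ Y) :=
    {g | ‖WeakDual.toStrongDual g‖ ≤ 1 ∧ ∀ v : X, g ↑v = f v} with hSdef
  have hS_eq : S = (WeakDual.toStrongDual ⁻¹' Metric.closedBall (0 : StrongDual ℝ Y) 1)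
      ∩ ⋂ v : X, {g : WeakDual ℝ Y | g ↑v = f v} := by
    ext g
    simp [hSdef, mem_closedBall_zero_iff, Set.mem_iInter]
  have hSclosed : IsClosed S := by
    rw [hS_eq]
    exact (WeakDual.isClosed_closedBall 0 1).inter
      (isClosed_iInter fun v => isClosed_eq (WeakDual.eval_continuous ((v : Y))) continuous_const)
  have hScomp : IsCompact S :=
    (WeakDual.isCompact_closedBall (𝕜 := ℝ) 0 1).of_isClosed_subset hSclosed
      (by rw [hS_eq]; exact Set.inter_subset_left)
  have hSne : S.Nonempty := by
    obtain ⟨g₀, hg₀ext, hg₀norm⟩ := exists_extension_norm_eq X f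
    refine ⟨StrongDual.toWeakDual g₀, ?_, fun v => hg₀ext v⟩
    show ‖WeakDual.toStrongDual (StrongDual.toWeakDual g₀)‖ ≤ 1
    rw [StrongDual.toStrongDual_toWeakDual, hg₀norm]
    exact hfnorm
  haveI : LocallyConvexSpace ℝ (WeakDual ℝ Y) := WeakBilin.locallyConvexSpace
  obtain ⟨z, hzS, hzext⟩ := hScomp.extremePoints_nonempty hSne
  -- helper for closed-ball membership of operators
  have ball_of_norm : ∀ g : X →L[ℝ] ℝ, ‖g‖ ≤ 1 → g ∈ Metric.closedBall (0 : X →L[ℝ] ℝ) 1 :=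
    fun g hg => Metric.mem_closedBall.2 (le_trans (le_of_eq (dist_zero_right g)) hg)
  set zN : Y →L[ℝ] ℝ := WeakDual.toStrongDual z with hzN
  have hzS1 : ‖zN‖ ≤ 1 := hzS.1
  have hzNrestrict : zN.comp X.subtypeL = f := by
    ext v
    exact hzS.2 v
  -- `zN` is an extreme point of the closed unit ball of `Y*`
  have hzNext : ∀ ⦃y₁ : Y →L[ℝ] ℝ⦄, ‖y₁‖ ≤ 1 → ∀ ⦃y₂ : Y →L[ℝ] ℝ⦄, ‖y₂‖ ≤ 1 →
      zN ∈ openSegment ℝ y₁ y₂ → y₁ = zN ∧ y₂ = zN := by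
    intro y₁ h₁ y₂ h₂ hseg
    obtain ⟨a, b, ha, hb, hab, hsum⟩ := hseg
    have hfseg : f ∈ openSegment ℝ (y₁.comp X.subtypeL) (y₂.comp X.subtypeL) := by
      refine ⟨a, b, ha, hb, hab, ?_⟩
      rw [← ContinuousLinearMap.smul_comp, ← ContinuousLinearMap.smul_comp,
        ← ContinuousLinearMap.add_comp, hsum, hzNrestrict]
    have hmem₁ := ball_of_norm _ (le_trans (hr_norm y₁) h₁)
    have hmem₂ := ball_of_norm _ (le_trans (hr_norm y₂) h₂)
    obtain ⟨e₁, e₂⟩ := And.intro (hfext hmem₁ hmem₂ hfseg)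
      (hfext hmem₂ hmem₁ (by rw [openSegment_symm]; exact hfseg))
    have hw₁ : StrongDual.toWeakDual y₁ ∈ S := by
      refine ⟨?_, fun v => ?_⟩
      · show ‖WeakDual.toStrongDual (StrongDual.toWeakDual y₁)‖ ≤ 1
        rwa [StrongDual.toStrongDual_toWeakDual]
      · exact congrArg (fun g => g v) e₁
    have hw₂ : StrongDual.toWeakDual y₂ ∈ S := by
      refine ⟨?_, fun v => ?_⟩
      · show ‖WeakDual.toStrongDual (StrongDual.toWeakDual y₂)‖ ≤ 1
        rwa [StrongDual.toStrongDual_toWeakDual]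
      · exact congrArg (fun g => g v) e₂
    have hzseg : z ∈ openSegment ℝ (StrongDual.toWeakDual y₁)
        (StrongDual.toWeakDual y₂) := by
      refine ⟨a, b, ha, hb, hab, ?_⟩
      have : a • StrongDual.toWeakDual y₁ + b • StrongDual.toWeakDual y₂ =
          StrongDual.toWeakDual (a • y₁ + b • y₂) := by
        rw [map_add, map_smul, map_smul]
      rw [this, hsum]
      exact StrongDual.toWeakDual.apply_symm_apply z
    obtain ⟨E₁, E₂⟩ := And.intro (hzext hw₁ hw₂ hzseg)
      (hzext hw₂ hw₁ (by rw [openSegment_symm]; exact hzseg))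
    constructor
    · have := congrArg WeakDual.toStrongDual E₁
      rwa [StrongDual.toStrongDual_toWeakDual] at this
    · have := congrArg WeakDual.toStrongDual E₂
      rwa [StrongDual.toStrongDual_toWeakDual] at this
  -- pull back through the isometry
  set x : lp (fun _ : ℕ => ℝ) 1 := T.symm zN with hxdef
  have hxext : x ∈ Set.extremePoints ℝ (Metric.closedBall (0 : lp (fun _ : ℕ => ℝ) 1) 1) := by
    constructor
    · rw [mem_closedBall_zero_iff, hxdef, T.symm.norm_map]
      exact hzS1
    · intro x₁ hx₁ x₂ hx₂ hseg
      obtain ⟨a, b, ha, hb, hab, hsum⟩ := hseg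
      have h₁ : ‖T x₁‖ ≤ 1 := by rw [T.norm_map]; exact mem_closedBall_zero_iff.1 hx₁
      have h₂ : ‖T x₂‖ ≤ 1 := by rw [T.norm_map]; exact mem_closedBall_zero_iff.1 hx₂
      have hzseg : zN ∈ openSegment ℝ (T x₁) (T x₂) := by
        refine ⟨a, b, ha, hb, hab, ?_⟩
        rw [← map_smul, ← map_smul, ← map_add, hsum, hxdef]
        exact T.apply_symm_apply zN
      obtain ⟨E₁, E₂⟩ := hzNext h₁ h₂ hzseg
      have := congrArg T.symm E₁
      rwa [T.symm_apply_apply, ← hxdef] at this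
  obtain ⟨k, δ, hδ, hxeq⟩ := lp1_extreme x hxext
  refine ⟨k, δ, hδ, ?_⟩
  have hzNval : zN = δ • T (lp.single 1 k 1) := by
    have : T x = zN := T.apply_symm_apply zN
    rw [← this, hxeq, map_smul]
  rw [← hzNrestrict, hzNval, ContinuousLinearMap.smul_comp]
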